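/- Let A be a finite-type abelian category, s an element of the ordered set S of simple isomorphism classes, M(s) a standard cover and N(s) a costandard hull of L(s). Then the pairing Hom(M(s), X) ⊗ Hom(X, N(s)) → Hom(M(s), N(s)) ≅ k given by composition is nondegenerate for any object X of A_{⪯s}; in particular dim Hom(M(s), X) = dim Hom(X, N(s)). -/

import Mathlib

open CategoryTheory CategoryTheory.Limits

attribute [local instance] CategoryTheory.Limits.HasFiniteBiproducts.of_hasFiniteProducts

universe v u

namespace StmtAux

variable {A : Type u} [Category.{v} A] [Abelian A]

/-- `CompFactors X l` asserts that `l` is a list of composition factors for `X`. -/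
inductive CompFactors : A → List A → Prop
  | nil {X : A} (h : IsZero X) : CompFactors X []
  | cons {X Y L : A} {l : List A} (hL : Simple L) (i : Y ⟶ X) (p : X ⟶ L)
      (w : i ≫ p = 0) (hse : (ShortComplex.mk i p w).ShortExact)
      (h : CompFactors Y l) : CompFactors X (L :: l)

open Classical in
/-- The multiplicity `[l : L]` : the number of members of `l` isomorphic to `L`. -/
noncomputable def mult (L : A) (l : List A) : ℕ :=
  l.countP (fun M => decide (Nonempty (M ≅ L)))

end StmtAux

open StmtAux

namespace StmtAux

variable {A : Type u} [Category.{v} A] [Abelian A] {S : Type*} [LinearOrder S]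

/-- `X` belongs to the Serre subcategory `A_{⪯ s}` generated by the simple
objects `L t` for `t ⪯ s`: all composition factors of `X` are of this form. -/
def InSub (L : S → A) (s : S) (X : A) : Prop :=
  ∃ l : List A, CompFactors X l ∧ ∀ M ∈ l, ∃ t : S, t ≤ s ∧ Nonempty (M ≅ L t)

/-- The data of standard covers `M s` and costandard hulls `N s` for the family
of simple objects `L s`, `s ∈ S`:  `M s` is a projective cover of `L s` within
the Serre subcategory `A_{⪯ s}` with `[M s : L s] = 1`, and `N s` is an injective
hull of `L s` within `A_{⪯ s}` with `[N s : L s] = 1`.  A category admitting such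
data is quasi-hereditary. -/
structure QHData (L : S → A) where
  M : S → A
  N : S → A
  φ : ∀ s : S, M s ⟶ L s
  ψ : ∀ s : S, L s ⟶ N s
  M_mem : ∀ s : S, InSub L s (M s)
  N_mem : ∀ s : S, InSub L s (N s)
  φ_epi : ∀ s : S, Epi (φ s)
  ψ_mono : ∀ s : S, Mono (ψ s)
  M_proj : ∀ (s : S) (X Y : A), InSub L s X → InSub L s Y →
      ∀ (p : X ⟶ Y), Epi p → ∀ f : M s ⟶ Y, ∃ g : M s ⟶ X, g ≫ p = f
  N_inj : ∀ (s : S) (X Y : A), InSub L s X → InSub L s Y →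
      ∀ (i : X ⟶ Y), Mono i → ∀ f : X ⟶ N s, ∃ g : Y ⟶ N s, i ≫ g = f
  φ_ess : ∀ (s : S) (Z : A) (g : Z ⟶ M s), Epi (g ≫ φ s) → Epi g
  ψ_ess : ∀ (s : S) (Z : A) (g : N s ⟶ Z), Mono (ψ s ≫ g) → Mono g
  M_mult : ∀ (s : S) (l : List A), CompFactors (M s) l → mult (L s) l = 1
  N_mult : ∀ (s : S) (l : List A), CompFactors (N s) l → mult (L s) l = 1

end StmtAux
namespace StmtAux

section Helpers

/-- Rank-nullity for an abstract short exact sequence of vector spaces. -/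
lemma findim_ses {K : Type*} [Field K] {D E F : Type*} [AddCommGroup D] [Module K D]
    [AddCommGroup E] [Module K E] [AddCommGroup F] [Module K F]
    [FiniteDimensional K D] [FiniteDimensional K F]
    (α : D →ₗ[K] E) (β : E →ₗ[K] F) (hα : Function.Injective α) (hβ : Function.Surjective β)
    (h : LinearMap.ker β = LinearMap.range α) :
    FiniteDimensional K E ∧
      Module.finrank K E = Module.finrank K D + Module.finrank K F := by
  have hfin : FiniteDimensional K E := by
    have h1 : (Submodule.map β ⊤).FG := by
      rw [Submodule.map_top, LinearMap.range_eq_top.2 hβ]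
      exact Module.finite_def.mp inferInstance
    have h2 : ((⊤ : Submodule K E) ⊓ LinearMap.ker β).FG := by
      rw [top_inf_eq, h, LinearMap.range_eq_map]
      exact (Module.finite_def.mp inferInstance).map α
    exact Module.finite_def.mpr (Submodule.fg_of_fg_map_of_fg_inf_ker β h1 h2)
  refine ⟨hfin, ?_⟩
  have h3 := LinearMap.finrank_range_add_finrank_ker β
  have h4 : Module.finrank K (LinearMap.range β) = Module.finrank K F := by
    rw [LinearMap.range_eq_top.2 hβ]; exact finrank_top K F
  have h5 : Module.finrank K (LinearMap.ker β) = Module.finrank K D := by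
    rw [h]; exact (LinearEquiv.finrank_eq (LinearEquiv.ofInjective α hα)).symm
  omega

variable {A : Type u} [Category.{v} A] [Abelian A]

lemma isZero_of_compFactors_nil {X : A} (h : CompFactors X ([] : List A)) : IsZero X := by
  cases h with | nil h => exact h

/-- The kernel short exact sequence of an epimorphism. -/
lemma shortExact_kernel {X T : A} (f : X ⟶ T) [Epi f] :
    (ShortComplex.mk (kernel.ι f) f (kernel.condition f)).ShortExact := by
  refine ShortComplex.ShortExact.mk' ?_ inferInstance inferInstance
  exact ShortComplex.exact_of_f_is_kernel _ (kernelIsKernel f)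

open ZeroObject in
/-- A simple object has `[T]` as composition factors. -/
lemma compFactors_simple {T : A} (hT : Simple T) : CompFactors T [T] := by
  have w : (0 : (0 : A) ⟶ T) ≫ 𝟙 T = 0 := by simp
  refine CompFactors.cons hT (0 : (0 : A) ⟶ T) (𝟙 T) w ?_
    (CompFactors.nil (isZero_zero A))
  refine ShortComplex.Splitting.shortExact
    { r := 0, s := 𝟙 T, f_r := ?_, s_g := by simp, id := by simp }
  apply (isZero_zero A).eq_of_tgt

lemma epi_of_ne_zero_to_simple {X T : A} {f : X ⟶ T} (hT : Simple T) (hf : f ≠ 0) : Epi f := by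
  haveI := hT
  exact epi_of_nonzero_to_simple hf

lemma mono_of_ne_zero_from_simple {T X : A} {f : T ⟶ X} (hT : Simple T) (hf : f ≠ 0) : Mono f := by
  haveI := hT
  exact mono_of_nonzero_from_simple hf

lemma not_isZero_of_simple {T : A} (hT : Simple T) : ¬ IsZero T := by
  haveI := hT; exact Simple.not_isZero T

/-- Closure of having composition factors among `l` under subobjects. -/
lemma compFactors_sub {X : A} {l : List A} (h : CompFactors X l) :
    ∀ {W : A} (m : W ⟶ X), Mono m →
      ∃ lW : List A, CompFactors W lW ∧ ∀ T ∈ lW, ∃ T' ∈ l, Nonempty (T ≅ T') := by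
  induction h with
  | nil h =>
    intro W m hm
    haveI := hm
    exact ⟨[], CompFactors.nil (IsZero.of_mono m h), by simp⟩
  | @cons X Y T l hT i p w hse hY IH =>
    intro W m hm
    haveI := hm
    haveI := hse.mono_f
    haveI := hse.epi_g
    by_cases hz : m ≫ p = 0
    · obtain ⟨m', hm'⟩ := hse.exact.lift' m hz
      have : Mono (m' ≫ i) := by rw [hm']; infer_instance
      obtain ⟨lW, hc, hmem⟩ := IH m' (mono_of_mono m' i)
      exact ⟨lW, hc, fun T' hT' => by
        obtain ⟨T'', hT'', hiso⟩ := hmem T' hT'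
        exact ⟨T'', List.mem_cons_of_mem _ hT'', hiso⟩⟩
    · have hp' : Epi (m ≫ p) := epi_of_ne_zero_to_simple hT hz
      haveI := hp'
      have hcond : (kernel.ι (m ≫ p) ≫ m) ≫ p = 0 := by
        rw [Category.assoc]; exact kernel.condition (m ≫ p)
      obtain ⟨n, hn⟩ := hse.exact.lift' (kernel.ι (m ≫ p) ≫ m) hcond
      have : Mono (n ≫ i) := by rw [hn]; exact mono_comp _ _
      obtain ⟨lK, hcK, hmemK⟩ := IH n (mono_of_mono n i)
      refine ⟨T :: lK, CompFactors.cons hT (kernel.ι (m ≫ p)) (m ≫ p)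
        (kernel.condition _) (shortExact_kernel _) hcK, ?_⟩
      intro T' hT'
      rcases List.mem_cons.mp hT' with h' | h'
      · exact ⟨T, List.mem_cons_self, ⟨h' ▸ Iso.refl T'⟩⟩
      · obtain ⟨T'', hT'', hiso⟩ := hmemK T' h'
        exact ⟨T'', List.mem_cons_of_mem _ hT'', hiso⟩

/-- Closure of having composition factors among `l` under quotients. -/
lemma compFactors_quot {X : A} {l : List A} (h : CompFactors X l) :
    ∀ {Q : A} (e : X ⟶ Q), Epi e →
      ∃ lQ : List A, CompFactors Q lQ ∧ ∀ T ∈ lQ, ∃ T' ∈ l, Nonempty (T ≅ T') := by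
  induction h with
  | nil h =>
    intro Q e he
    haveI := he
    exact ⟨[], CompFactors.nil (IsZero.of_epi e h), by simp⟩
  | @cons X Y T l hT i p w hse hY IH =>
    intro Q e he
    haveI := he
    haveI := hse.mono_f
    haveI := hse.epi_g
    set f : Y ⟶ Q := i ≫ e with hf
    set c : Q ⟶ cokernel f := cokernel.π f with hc
    have hic : i ≫ (e ≫ c) = 0 := by
      rw [← Category.assoc]; exact cokernel.condition f
    obtain ⟨u, hu⟩ := hse.exact.desc' (e ≫ c) hic
    by_cases hu0 : u = 0
    · have hc0 : c = 0 := by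
        have : e ≫ c = 0 := by rw [← hu, hu0, comp_zero]
        exact zero_of_epi_comp e this
      have hfe : Epi f := Preadditive.epi_of_cokernel_zero hc0
      obtain ⟨lQ, hcQ, hmQ⟩ := IH f hfe
      exact ⟨lQ, hcQ, fun T' hT' => by
        obtain ⟨T'', hT'', hiso⟩ := hmQ T' hT'
        exact ⟨T'', List.mem_cons_of_mem _ hT'', hiso⟩⟩
    · have hmu : Mono u := mono_of_ne_zero_from_simple hT hu0
      have hepu : Epi u := by
        have : Epi (p ≫ u) := by rw [hu]; exact epi_comp _ _
        exact epi_of_epi p u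
      haveI := hmu; haveI := hepu
      haveI : IsIso u := isIso_of_mono_of_epi u
      set j : Abelian.image f ⟶ Q := Abelian.image.ι f with hj
      set p₂ : Q ⟶ T := c ≫ inv u with hp₂
      have w₂ : j ≫ p₂ = 0 := by
        rw [hp₂, ← Category.assoc]
        have : j ≫ c = 0 := kernel.condition (cokernel.π f)
        rw [this, zero_comp]
      have hkis : IsLimit (KernelFork.ofι j w₂) := by
        refine KernelFork.IsLimit.ofι' j w₂ (fun {B} x hx => ?_)
        have hxc : x ≫ c = 0 := by
          have h1 : x ≫ c ≫ inv u = 0 := by rw [← hp₂]; exact hx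
          rw [← cancel_mono (inv u), zero_comp, Category.assoc]
          exact h1
        exact ⟨kernel.lift (cokernel.π f) x hxc, kernel.lift_ι _ _ _⟩
      have hse₂ : (ShortComplex.mk j p₂ w₂).ShortExact := by
        refine ShortComplex.ShortExact.mk' (ShortComplex.exact_of_f_is_kernel _ hkis) inferInstance (epi_comp c (inv u))
      obtain ⟨lQ', hcQ', hmQ'⟩ := IH (Abelian.factorThruImage f) inferInstance
      refine ⟨T :: lQ', CompFactors.cons hT j p₂ w₂ hse₂ hcQ', ?_⟩
      intro T' hT'
      rcases List.mem_cons.mp hT' with h' | h'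
      · exact ⟨T, List.mem_cons_self, ⟨h' ▸ Iso.refl T'⟩⟩
      · obtain ⟨T'', hT'', hiso⟩ := hmQ' T' h'
        exact ⟨T'', List.mem_cons_of_mem _ hT'', hiso⟩

variable {S : Type*} [LinearOrder S]

lemma inSub_sub {L : S → A} {s : S} {X W : A} (hX : InSub L s X) (m : W ⟶ X) (hm : Mono m) :
    InSub L s W := by
  obtain ⟨l, hl, hmem⟩ := hX
  obtain ⟨lW, hc, hm'⟩ := compFactors_sub hl m hm
  refine ⟨lW, hc, fun T hT => ?_⟩
  obtain ⟨T', hT', ⟨e⟩⟩ := hm' T hT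
  obtain ⟨t, ht, ⟨e'⟩⟩ := hmem T' hT'
  exact ⟨t, ht, ⟨e.trans e'⟩⟩

lemma inSub_quot {L : S → A} {s : S} {X Q : A} (hX : InSub L s X) (e : X ⟶ Q) (he : Epi e) :
    InSub L s Q := by
  obtain ⟨l, hl, hmem⟩ := hX
  obtain ⟨lQ, hc, hm'⟩ := compFactors_quot hl e he
  refine ⟨lQ, hc, fun T hT => ?_⟩
  obtain ⟨T', hT', ⟨e₁⟩⟩ := hm' T hT
  obtain ⟨t, ht, ⟨e'⟩⟩ := hmem T' hT'
  exact ⟨t, ht, ⟨e₁.trans e'⟩⟩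

lemma inSub_simple {L : S → A} {s : S} {T : A} (hT : Simple T) {t : S} (ht : t ≤ s)
    (e : T ≅ L t) : InSub L s T :=
  ⟨[T], compFactors_simple hT, fun M hM => ⟨t, ht, ⟨(List.mem_singleton.mp hM) ▸ e⟩⟩⟩

/-- A nonzero object of finite length has a simple subobject. -/
lemma exists_simple_sub {X : A} {l : List A} (h : CompFactors X l) (hl : l ≠ []) :
    ∃ (T : A) (n : T ⟶ X), Simple T ∧ Mono n := by
  induction h with
  | nil h => exact absurd rfl hl
  | @cons X Y T l hT i p w hse hY IH =>
    haveI := hse.mono_f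
    haveI := hse.epi_g
    by_cases hl' : l = []
    · subst hl'
      have hYz : IsZero Y := isZero_of_compFactors_nil hY
      have hi0 : i = 0 := hYz.eq_of_src i 0
      have : Mono p := hse.exact.mono_g hi0
      haveI := this
      haveI : IsIso p := isIso_of_mono_of_epi p
      exact ⟨T, inv p, hT, inferInstance⟩
    · obtain ⟨T', n, hT', hn⟩ := IH hl'
      haveI := hn
      exact ⟨T', n ≫ i, hT', mono_comp _ _⟩

end Helpers
end StmtAux
namespace StmtAux
section Dims

variable {A : Type u} [Category.{v} A] [Abelian A] {S : Type*} [LinearOrder S]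

/-- `M s` has simple top `L s`: any simple quotient of `M s` is `L s`. -/
lemma top_iso {L : S → A} (hsimple : ∀ s : S, Simple (L s)) (d : QHData L) (s : S)
    {T : A} (hT : Simple T) (e : d.M s ⟶ T) (he : Epi e) :
    ∃ u : T ⟶ L s, IsIso u ∧ e ≫ u = d.φ s := by
  haveI := he
  have hne : e ≠ 0 := fun h0 => not_isZero_of_simple hT (IsZero.of_epi_eq_zero e h0)
  have hcond : kernel.ι e ≫ d.φ s = 0 := by
    by_contra hc
    have hepi : Epi (kernel.ι e ≫ d.φ s) := epi_of_ne_zero_to_simple (hsimple s) hc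
    have hι : Epi (kernel.ι e) := d.φ_ess s _ (kernel.ι e) hepi
    haveI := hι
    exact hne (zero_of_epi_comp (kernel.ι e) (kernel.condition e))
  refine ⟨Abelian.epiDesc e (d.φ s) hcond, ?_, Abelian.comp_epiDesc _ _ _⟩
  have hu0 : Abelian.epiDesc e (d.φ s) hcond ≠ 0 := by
    intro h0
    have hφ0 : d.φ s = 0 := by
      rw [← Abelian.comp_epiDesc e (d.φ s) hcond, h0, comp_zero]
    haveI := d.φ_epi s
    exact not_isZero_of_simple (hsimple s) (IsZero.of_epi_eq_zero (d.φ s) hφ0)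
  haveI := hT; haveI := hsimple s
  exact isIso_of_hom_simple hu0

/-- `N s` has simple socle `L s`: any simple subobject of `N s` is `L s`. -/
lemma socle_iso {L : S → A} (hsimple : ∀ s : S, Simple (L s)) (d : QHData L) (s : S)
    {T : A} (hT : Simple T) (n : T ⟶ d.N s) (hn : Mono n) :
    ∃ v : L s ⟶ T, IsIso v ∧ v ≫ n = d.ψ s := by
  haveI := hn
  have hne : n ≠ 0 := fun h0 => not_isZero_of_simple hT (IsZero.of_mono_eq_zero n h0)
  have hcond : d.ψ s ≫ cokernel.π n = 0 := by
    by_contra hc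
    have hm : Mono (d.ψ s ≫ cokernel.π n) := mono_of_ne_zero_from_simple (hsimple s) hc
    have hπ : Mono (cokernel.π n) := d.ψ_ess s _ (cokernel.π n) hm
    haveI := hπ
    exact hne (zero_of_comp_mono (cokernel.π n) (cokernel.condition n))
  refine ⟨Abelian.monoLift n (d.ψ s) hcond, ?_, Abelian.monoLift_comp _ _ _⟩
  have hv0 : Abelian.monoLift n (d.ψ s) hcond ≠ 0 := by
    intro h0
    have hψ0 : d.ψ s = 0 := by
      rw [← Abelian.monoLift_comp n (d.ψ s) hcond, h0, zero_comp]
    haveI := d.ψ_mono s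
    exact not_isZero_of_simple (hsimple s) (IsZero.of_mono_eq_zero (d.ψ s) hψ0)
  haveI := hsimple s; haveI := hT
  exact isIso_of_hom_simple hv0

lemma homM_simple_zero {L : S → A} (hsimple : ∀ s : S, Simple (L s)) (d : QHData L) (s : S)
    {T : A} (hT : Simple T) (hne : ¬ Nonempty (T ≅ L s)) (f : d.M s ⟶ T) : f = 0 := by
  by_contra hf
  obtain ⟨u, hu, -⟩ := top_iso hsimple d s hT f (epi_of_ne_zero_to_simple hT hf)
  haveI := hu
  exact hne ⟨asIso u⟩

lemma homN_simple_zero {L : S → A} (hsimple : ∀ s : S, Simple (L s)) (d : QHData L) (s : S)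
    {T : A} (hT : Simple T) (hne : ¬ Nonempty (T ≅ L s)) (f : T ⟶ d.N s) : f = 0 := by
  by_contra hf
  obtain ⟨v, hv, -⟩ := socle_iso hsimple d s hT f (mono_of_ne_zero_from_simple hT hf)
  haveI := hv
  exact hne ⟨(asIso v).symm⟩

variable {k : Type*} [Field k] [Linear k A]

lemma homM_simple_dim (hend : ∀ L : A, Simple L → ∀ f : L ⟶ L, ∃ c : k, f = c • 𝟙 L)
    {L : S → A} (hsimple : ∀ s : S, Simple (L s)) (d : QHData L) (s : S)
    {T : A} (hT : Simple T) (w : T ≅ L s) :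
    FiniteDimensional k (d.M s ⟶ T) ∧ Module.finrank k (d.M s ⟶ T) = 1 := by
  set b : d.M s ⟶ T := d.φ s ≫ w.inv with hb
  haveI := d.φ_epi s
  have hbe : Epi b := epi_comp _ _
  have hb0 : b ≠ 0 := fun h0 =>
    not_isZero_of_simple hT (@IsZero.of_epi_eq_zero _ _ _ _ _ b hbe h0)
  have hspan : ∀ f : d.M s ⟶ T, ∃ c : k, c • b = f := by
    intro f
    by_cases hf : f = 0
    · exact ⟨0, by rw [zero_smul, hf]⟩
    · obtain ⟨u, hu, hcomp⟩ := top_iso hsimple d s hT f (epi_of_ne_zero_to_simple hT hf)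
      haveI := hu
      obtain ⟨c, hc⟩ := hend T hT (w.hom ≫ inv u)
      have hf' : f = b ≫ (w.hom ≫ inv u) := by
        rw [hb, Category.assoc, Iso.inv_hom_id_assoc, ← hcomp, Category.assoc,
          IsIso.hom_inv_id, Category.comp_id]
      refine ⟨c, ?_⟩
      rw [hf', hc, Linear.comp_smul, Category.comp_id]
  have hsurj : Function.Surjective (LinearMap.toSpanSingleton k (d.M s ⟶ T) b) := fun f => hspan f
  exact ⟨Module.Finite.of_surjective _ hsurj, finrank_eq_one b hb0 hspan⟩

lemma homN_simple_dim (hend : ∀ L : A, Simple L → ∀ f : L ⟶ L, ∃ c : k, f = c • 𝟙 L)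
    {L : S → A} (hsimple : ∀ s : S, Simple (L s)) (d : QHData L) (s : S)
    {T : A} (hT : Simple T) (w : T ≅ L s) :
    FiniteDimensional k (T ⟶ d.N s) ∧ Module.finrank k (T ⟶ d.N s) = 1 := by
  set b : T ⟶ d.N s := w.hom ≫ d.ψ s with hb
  haveI := d.ψ_mono s
  have hbm : Mono b := mono_comp _ _
  have hb0 : b ≠ 0 := fun h0 =>
    not_isZero_of_simple hT (@IsZero.of_mono_eq_zero _ _ _ _ _ b hbm h0)
  have hspan : ∀ f : T ⟶ d.N s, ∃ c : k, c • b = f := by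
    intro f
    by_cases hf : f = 0
    · exact ⟨0, by rw [zero_smul, hf]⟩
    · obtain ⟨v, hv, hcomp⟩ := socle_iso hsimple d s hT f (mono_of_ne_zero_from_simple hT hf)
      haveI := hv
      obtain ⟨c, hc⟩ := hend T hT (inv v ≫ w.inv)
      have hf' : f = (inv v ≫ w.inv) ≫ b := by
        rw [hb]
        simp only [Category.assoc, Iso.inv_hom_id_assoc, ← hcomp, IsIso.inv_hom_id_assoc]
      refine ⟨c, ?_⟩
      rw [hf', hc, Linear.smul_comp, Category.id_comp]
  have hsurj : Function.Surjective (LinearMap.toSpanSingleton k (T ⟶ d.N s) b) := fun f => hspan f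
  exact ⟨Module.Finite.of_surjective _ hsurj, finrank_eq_one b hb0 hspan⟩

open Classical in
lemma homM_simple_dim' (hend : ∀ L : A, Simple L → ∀ f : L ⟶ L, ∃ c : k, f = c • 𝟙 L)
    {L : S → A} (hsimple : ∀ s : S, Simple (L s)) (d : QHData L) (s : S)
    {T : A} (hT : Simple T) :
    FiniteDimensional k (d.M s ⟶ T) ∧
      Module.finrank k (d.M s ⟶ T) = (if Nonempty (T ≅ L s) then 1 else 0) := by
  by_cases hts : Nonempty (T ≅ L s)
  · rw [if_pos hts]
    exact homM_simple_dim hend hsimple d s hT hts.some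
  · rw [if_neg hts]
    have hsub : Subsingleton (d.M s ⟶ T) := ⟨fun f g => by
      rw [homM_simple_zero hsimple d s hT hts f, homM_simple_zero hsimple d s hT hts g]⟩
    haveI := hsub
    exact ⟨inferInstance, Module.finrank_zero_of_subsingleton⟩

open Classical in
lemma homN_simple_dim' (hend : ∀ L : A, Simple L → ∀ f : L ⟶ L, ∃ c : k, f = c • 𝟙 L)
    {L : S → A} (hsimple : ∀ s : S, Simple (L s)) (d : QHData L) (s : S)
    {T : A} (hT : Simple T) :
    FiniteDimensional k (T ⟶ d.N s) ∧
      Module.finrank k (T ⟶ d.N s) = (if Nonempty (T ≅ L s) then 1 else 0) := by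
  by_cases hts : Nonempty (T ≅ L s)
  · rw [if_pos hts]
    exact homN_simple_dim hend hsimple d s hT hts.some
  · rw [if_neg hts]
    have hsub : Subsingleton (T ⟶ d.N s) := ⟨fun f g => by
      rw [homN_simple_zero hsimple d s hT hts f, homN_simple_zero hsimple d s hT hts g]⟩
    haveI := hsub
    exact ⟨inferInstance, Module.finrank_zero_of_subsingleton⟩

open Classical in
lemma mult_cons (Ls T : A) (l : List A) :
    mult Ls (T :: l) = mult Ls l + (if Nonempty (T ≅ Ls) then 1 else 0) := by
  by_cases h : Nonempty (T ≅ Ls)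
  · rw [if_pos h]; simp [mult, List.countP_cons, h]
  · rw [if_neg h]; simp [mult, List.countP_cons, h]

end Dims
end StmtAux
namespace StmtAux
section DimAB

variable {A : Type u} [Category.{v} A] [Abelian A] {S : Type*} [LinearOrder S]
variable {k : Type*} [Field k] [Linear k A]

open Classical in
lemma dimA (hend : ∀ L : A, Simple L → ∀ f : L ⟶ L, ∃ c : k, f = c • 𝟙 L)
    {L : S → A} (hsimple : ∀ s : S, Simple (L s))
    (hdist : ∀ s t : S, Nonempty (L s ≅ L t) → s = t)
    (d : QHData L) (s : S) {l : List A} {X : A} (h : CompFactors X l) :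
    (∀ T ∈ l, ∃ t : S, t ≤ s ∧ Nonempty (T ≅ L t)) →
      FiniteDimensional k (d.M s ⟶ X) ∧
        Module.finrank k (d.M s ⟶ X) = mult (L s) l := by
  induction h with
  | @nil X h =>
    intro _
    have hsub : Subsingleton (d.M s ⟶ X) := ⟨fun f g => h.eq_of_tgt f g⟩
    haveI := hsub
    exact ⟨inferInstance, by rw [Module.finrank_zero_of_subsingleton]; simp [mult]⟩
  | @cons X Y T l hT i p w hse hY IH =>
    intro hmem
    haveI := hse.mono_f
    haveI := hse.epi_g
    obtain ⟨t, ht, ⟨wT⟩⟩ := hmem T (List.mem_cons_self)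
    obtain ⟨hfinY, hrkY⟩ := IH (fun T' h' => hmem T' (List.mem_cons_of_mem _ h'))
    obtain ⟨hfinT, hrkT⟩ := homM_simple_dim' hend hsimple d s hT
    haveI := hfinY; haveI := hfinT
    set α := Linear.rightComp k (d.M s) i with hα
    set β := Linear.rightComp k (d.M s) p with hβ
    have hαinj : Function.Injective α := by
      intro f g hfg
      have : f ≫ i = g ≫ i := hfg
      exact (cancel_mono i).mp this
    have hβsurj : Function.Surjective β := by
      intro f
      have hXin : InSub L s X :=
        ⟨T :: l, CompFactors.cons hT i p w hse hY,  hmem⟩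
      have hTin : InSub L s T := inSub_simple hT ht wT
      obtain ⟨g, hg⟩ := d.M_proj s X T hXin hTin p inferInstance f
      exact ⟨g, hg⟩
    have hker : LinearMap.ker β = LinearMap.range α := by
      ext g
      simp only [LinearMap.mem_ker, LinearMap.mem_range]
      constructor
      · intro hg
        obtain ⟨g', hg'⟩ := hse.exact.lift' g hg
        exact ⟨g', hg'⟩
      · rintro ⟨g', rfl⟩
        show (g' ≫ i) ≫ p = 0
        rw [Category.assoc, w, comp_zero]
    obtain ⟨hfinX, hrkX⟩ := findim_ses α β hαinj hβsurj hker
    refine ⟨hfinX, ?_⟩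
    rw [hrkX, hrkY, hrkT, mult_cons]

open Classical in
lemma dimB (hend : ∀ L : A, Simple L → ∀ f : L ⟶ L, ∃ c : k, f = c • 𝟙 L)
    {L : S → A} (hsimple : ∀ s : S, Simple (L s))
    (hdist : ∀ s t : S, Nonempty (L s ≅ L t) → s = t)
    (d : QHData L) (s : S) {l : List A} {X : A} (h : CompFactors X l) :
    (∀ T ∈ l, ∃ t : S, t ≤ s ∧ Nonempty (T ≅ L t)) →
      FiniteDimensional k (X ⟶ d.N s) ∧
        Module.finrank k (X ⟶ d.N s) = mult (L s) l := by
  induction h with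
  | @nil X h =>
    intro _
    have hsub : Subsingleton (X ⟶ d.N s) := ⟨fun f g => h.eq_of_src f g⟩
    haveI := hsub
    exact ⟨inferInstance, by rw [Module.finrank_zero_of_subsingleton]; simp [mult]⟩
  | @cons X Y T l hT i p w hse hY IH =>
    intro hmem
    haveI := hse.mono_f
    haveI := hse.epi_g
    obtain ⟨t, ht, ⟨wT⟩⟩ := hmem T (List.mem_cons_self)
    obtain ⟨hfinY, hrkY⟩ := IH (fun T' h' => hmem T' (List.mem_cons_of_mem _ h'))
    obtain ⟨hfinT, hrkT⟩ := homN_simple_dim' hend hsimple d s hT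
    haveI := hfinY; haveI := hfinT
    set α := Linear.leftComp k (d.N s) p with hα
    set β := Linear.leftComp k (d.N s) i with hβ
    have hαinj : Function.Injective α := by
      intro f g hfg
      have : p ≫ f = p ≫ g := hfg
      exact (cancel_epi p).mp this
    have hβsurj : Function.Surjective β := by
      intro f
      have hXin : InSub L s X :=
        ⟨T :: l, CompFactors.cons hT i p w hse hY, hmem⟩
      have hYin : InSub L s Y := inSub_sub hXin i inferInstance
      obtain ⟨g, hg⟩ := d.N_inj s Y X hYin hXin i inferInstance f
      exact ⟨g, hg⟩
    have hker : LinearMap.ker β = LinearMap.range α := by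
      ext g
      simp only [LinearMap.mem_ker, LinearMap.mem_range]
      constructor
      · intro hg
        obtain ⟨g', hg'⟩ := hse.exact.desc' g hg
        exact ⟨g', hg'⟩
      · rintro ⟨g', rfl⟩
        show i ≫ (p ≫ g') = 0
        rw [← Category.assoc, w, zero_comp]
    obtain ⟨hfinX, hrkX⟩ := findim_ses α β hαinj hβsurj hker
    refine ⟨hfinX, ?_⟩
    rw [hrkX, hrkY, hrkT, mult_cons]
    omega

end DimAB
end StmtAux
/-- For `X ∈ A_{⪯ s}`, the composition pairing
`Hom(M s, X) ⊗ Hom(X, N s) → Hom(M s, N s) ≅ k` is nondegenerate; in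
particular `dim Hom(M s, X) = dim Hom(X, N s)`. -/
theorem stmt7 (k : Type*) [Field k] (A : Type u) [Category.{v} A] [Abelian A]
    [Linear k A]
    (hfl : ∀ X : A, ∃ l : List A, CompFactors X l)
    (hend : ∀ L : A, Simple L → ∀ f : L ⟶ L, ∃ c : k, f = c • 𝟙 L)
    {S : Type*} [LinearOrder S] (L : S → A)
    (hsimple : ∀ s : S, Simple (L s))
    (hdist : ∀ s t : S, Nonempty (L s ≅ L t) → s = t)
    (d : QHData L) (s : S) (X : A) (hX : InSub L s X) :
    Module.finrank k (d.M s ⟶ d.N s) = 1 ∧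
    (∀ f : d.M s ⟶ X, f ≠ 0 → ∃ g : X ⟶ d.N s, f ≫ g ≠ 0) ∧
    (∀ g : X ⟶ d.N s, g ≠ 0 → ∃ f : d.M s ⟶ X, f ≫ g ≠ 0) ∧
    Module.finrank k (d.M s ⟶ X) = Module.finrank k (X ⟶ d.N s) := by
  classical
  obtain ⟨lX, hlX, hmemX⟩ := hX
  have hXin : InSub L s X := ⟨lX, hlX, hmemX⟩
  have hφψ : d.φ s ≫ d.ψ s ≠ 0 := by
    intro h0
    haveI := d.φ_epi s
    have hψ0 : d.ψ s = 0 := zero_of_epi_comp (d.φ s) h0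
    haveI := d.ψ_mono s
    exact not_isZero_of_simple (hsimple s) (IsZero.of_mono_eq_zero (d.ψ s) hψ0)
  refine ⟨?_, ?_, ?_, ?_⟩
  · -- dim Hom(M s, N s) = 1
    obtain ⟨lN, hlN, hmemN⟩ := d.N_mem s
    have hA := dimA (k := k) hend hsimple hdist d s hlN hmemN
    rw [hA.2, d.N_mult s lN hlN]
  · -- left nondegeneracy
    intro f hf
    have hfac : Abelian.factorThruImage f ≫ Abelian.image.ι f = f := Abelian.image.fac f
    have hI0 : ¬ IsZero (Abelian.image f) := by
      intro hz
      exact hf (by rw [← hfac, hz.eq_of_src (Abelian.image.ι f) 0, comp_zero])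
    obtain ⟨lI, hlI⟩ := hfl (Abelian.image f)
    rcases lI with _ | ⟨T, lI'⟩
    · exact absurd (isZero_of_compFactors_nil hlI) hI0
    cases hlI with
    | cons hT i2 p2 w2 hse2 h2 =>
      haveI := hse2.epi_g
      have hq : Epi (Abelian.factorThruImage f ≫ p2) := epi_comp _ _
      obtain ⟨u, hu, hcomp⟩ := top_iso hsimple d s hT (Abelian.factorThruImage f ≫ p2) hq
      have hIin : InSub L s (Abelian.image f) := inSub_sub hXin (Abelian.image.ι f) inferInstance
      obtain ⟨g, hg⟩ := d.N_inj s (Abelian.image f) X hIin hXin (Abelian.image.ι f)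
        inferInstance (p2 ≫ u ≫ d.ψ s)
      refine ⟨g, ?_⟩
      have hfg : f ≫ g = d.φ s ≫ d.ψ s := by
        calc f ≫ g = Abelian.factorThruImage f ≫ (Abelian.image.ι f ≫ g) := by
              rw [← Category.assoc, hfac]
          _ = Abelian.factorThruImage f ≫ (p2 ≫ u ≫ d.ψ s) := by rw [hg]
          _ = ((Abelian.factorThruImage f ≫ p2) ≫ u) ≫ d.ψ s := by
              simp only [Category.assoc]
          _ = d.φ s ≫ d.ψ s := by rw [hcomp]
      rw [hfg]; exact hφψ
  · -- right nondegeneracy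
    intro g hg
    have hfac : Abelian.factorThruImage g ≫ Abelian.image.ι g = g := Abelian.image.fac g
    have hI0 : ¬ IsZero (Abelian.image g) := by
      intro hz
      exact hg (by rw [← hfac, hz.eq_of_tgt (Abelian.factorThruImage g) 0, zero_comp])
    obtain ⟨lI, hlI⟩ := hfl (Abelian.image g)
    have hlne : lI ≠ [] := fun h => hI0 (isZero_of_compFactors_nil (h ▸ hlI))
    obtain ⟨T, n, hT, hn⟩ := exists_simple_sub hlI hlne
    haveI := hn
    have hnι : Mono (n ≫ Abelian.image.ι g) := mono_comp _ _
    obtain ⟨v, hv, hcomp⟩ := socle_iso hsimple d s hT (n ≫ Abelian.image.ι g) hnι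
    have hIin : InSub L s (Abelian.image g) := inSub_quot hXin (Abelian.factorThruImage g)
      inferInstance
    obtain ⟨f, hf'⟩ := d.M_proj s X (Abelian.image g) hXin hIin (Abelian.factorThruImage g)
      inferInstance (d.φ s ≫ v ≫ n)
    refine ⟨f, ?_⟩
    have hfg : f ≫ g = d.φ s ≫ d.ψ s := by
      calc f ≫ g = (f ≫ Abelian.factorThruImage g) ≫ Abelian.image.ι g := by
            rw [Category.assoc, hfac]
        _ = (d.φ s ≫ v ≫ n) ≫ Abelian.image.ι g := by rw [hf']
        _ = d.φ s ≫ (v ≫ (n ≫ Abelian.image.ι g)) := by simp only [Category.assoc]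
        _ = d.φ s ≫ d.ψ s := by rw [hcomp]
    rw [hfg]; exact hφψ
  · -- equality of dimensions
    have hA := dimA (k := k) hend hsimple hdist d s hlX hmemX
    have hB := dimB (k := k) hend hsimple hdist d s hlX hmemX
    rw [hA.2, hB.2]
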